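/- arXiv:1112.2100 — 3 statements merged into one kernel-verified Lean document; each statement's English description precedes it below -/
import Mathlib

section
/- For all n, Σ_{k=0}^n C(n,k) ℰ_k^{(α)}(0) 𝒢_{n-k}^{(α)}(x + x₁) = Σ_{k=0}^n C(n,k) ℰ_k^{(α)}(x) 𝒢_{n-k}^{(α)}(x₁). -/
/-- Series of `e^{xt}` : coefficients `x^n/n!`. -/
noncomputable def expS (x : ℝ) : PowerSeries ℝ :=
  PowerSeries.mk fun n => x ^ n / n.factorial

/-- Series of `e^{t} + e^{-t}` : coefficients `(1+(-1)^n)/n!`. -/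
noncomputable def coshS : PowerSeries ℝ :=
  PowerSeries.mk fun n => (1 + (-1 : ℝ) ^ n) / n.factorial

/-- Series of `e^{y t^j}` : coefficients `y^{n/j}/(n/j)!` when `j ∣ n`. -/
noncomputable def expTail (j : ℕ) (y : ℝ) : PowerSeries ℝ :=
  PowerSeries.mk fun n => if j ∣ n then y ^ (n / j) / (n / j).factorial else 0

lemma expS_eq (x : ℝ) : expS x = PowerSeries.rescale x (PowerSeries.exp ℝ) := by
  ext n
  simp [expS, PowerSeries.coeff_rescale, PowerSeries.coeff_exp, div_eq_mul_inv]

lemma expS_mul (x y : ℝ) : expS x * expS y = expS (x + y) := by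
  simp [expS_eq, PowerSeries.exp_mul_exp_eq_exp_add]

lemma coshS_ne_zero : coshS ≠ 0 := by
  intro h
  have : PowerSeries.constantCoeff coshS = 2 := by
    simp [coshS, PowerSeries.constantCoeff_mk]
    norm_num
  rw [h] at this
  simp at this

lemma sumconv (n : ℕ) (f g : ℕ → ℝ) :
    ∑ k ∈ Finset.range (n + 1), (n.choose k : ℝ) * f k * g (n - k) =
      (n.factorial : ℝ) *
        ∑ k ∈ Finset.range (n + 1), f k / k.factorial * (g (n - k) / (n - k).factorial) := by
  rw [Finset.mul_sum]
  apply Finset.sum_congr rfl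
  intro k hk
  have hk' : k ≤ n := Nat.lt_succ_iff.mp (Finset.mem_range.mp hk)
  have h2 : ((n.choose k : ℝ)) * k.factorial * (n - k).factorial = n.factorial := by
    exact_mod_cast congrArg (Nat.cast : ℕ → ℝ) (Nat.choose_mul_factorial_mul_factorial hk')
  have hkf : (k.factorial : ℝ) ≠ 0 := Nat.cast_ne_zero.mpr k.factorial_ne_zero
  have hnkf : ((n - k).factorial : ℝ) ≠ 0 := Nat.cast_ne_zero.mpr (n - k).factorial_ne_zero
  field_simp
  linear_combination f k * g (n - k) * h2

theorem euler_genocchi_convolution (E : ℕ → ℕ → ℝ → ℝ) (G : ℕ → ℕ → ℝ → ℝ)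
    (hE : ∀ (α : ℕ) (x : ℝ),
      coshS ^ α * PowerSeries.mk (fun n => E α n x / n.factorial) = 2 ^ α * expS x)
    (hG : ∀ (α : ℕ) (x : ℝ),
      coshS ^ α * PowerSeries.mk (fun n => G α n x / n.factorial) =
        (2 * PowerSeries.X) ^ α * expS x) :
    ∀ (α n : ℕ) (x x₁ : ℝ),
      ∑ k ∈ Finset.range (n + 1), (n.choose k : ℝ) * E α k 0 * G α (n - k) (x + x₁) =
      ∑ k ∈ Finset.range (n + 1), (n.choose k : ℝ) * E α k x * G α (n - k) x₁ := by
  intro α n x x₁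
  set A := PowerSeries.mk (fun n => E α n 0 / n.factorial) with hA
  set B := PowerSeries.mk (fun n => G α n (x + x₁) / n.factorial) with hB
  set C := PowerSeries.mk (fun n => E α n x / n.factorial) with hC
  set D := PowerSeries.mk (fun n => G α n x₁ / n.factorial) with hD
  have hcancel : coshS ^ α * coshS ^ α ≠ 0 :=
    mul_ne_zero (pow_ne_zero _ coshS_ne_zero) (pow_ne_zero _ coshS_ne_zero)
  have key : A * B = C * D := by
    apply mul_left_cancel₀ hcancel
    calc coshS ^ α * coshS ^ α * (A * B)
        = (coshS ^ α * A) * (coshS ^ α * B) := by ring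
      _ = (2 ^ α * (2 * PowerSeries.X) ^ α) * (expS 0 * expS (x + x₁)) := by
          rw [hE, hG]; ring
      _ = (2 ^ α * (2 * PowerSeries.X) ^ α) * (expS x * expS x₁) := by
          rw [expS_mul, expS_mul, zero_add]
      _ = (coshS ^ α * C) * (coshS ^ α * D) := by rw [hE, hG]; ring
      _ = coshS ^ α * coshS ^ α * (C * D) := by ring
  have hc := congrArg (PowerSeries.coeff n) key
  rw [PowerSeries.coeff_mul, PowerSeries.coeff_mul,
    Finset.Nat.sum_antidiagonal_eq_sum_range_succ_mk,
    Finset.Nat.sum_antidiagonal_eq_sum_range_succ_mk] at hc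
  simp only [hA, hB, hC, hD, PowerSeries.coeff_mk] at hc
  rw [sumconv n (fun k => E α k 0) (fun m => G α m (x + x₁)),
    sumconv n (fun k => E α k x) (fun m => G α m x₁), hc]
end

section
/- The Hermite-based second kind Genocchi polynomials with j = 2 and a = 1 satisfy the explicit expansion ₕ𝒢_n^{(2,1)}(x,y) = n! Σ_{l=0}^{⌊n/2⌋} y^l 𝒢_{n-2l}(x) / (l! (n-2l)!). -/
lemma sum_even (n : ℕ) (g : ℕ → ℝ) :
    ∑ i ∈ Finset.range (n + 1), (if 2 ∣ i then g i else 0)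
      = ∑ l ∈ Finset.range (n / 2 + 1), g (2 * l) := by
  rw [← Finset.sum_filter]
  apply Finset.sum_nbij' (fun i => i / 2) (fun l => 2 * l)
  · intro i hi
    simp only [Finset.mem_filter, Finset.mem_range] at hi ⊢
    omega
  · intro l hl
    simp only [Finset.mem_filter, Finset.mem_range] at hl ⊢
    omega
  · intro i hi
    simp only [Finset.mem_filter] at hi
    omega
  · intro l hl; omega
  · intro i hi
    simp only [Finset.mem_filter] at hi
    obtain ⟨_, k, rfl⟩ := hi
    congr 1
    omega

theorem hermite_genocchi_explicit (SG : ℕ → ℝ → ℝ) (HG : ℕ → ℝ → ℝ → ℝ)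
    (hSG : ∀ x : ℝ, coshS * PowerSeries.mk (fun n => SG n x / n.factorial) =
        2 * PowerSeries.X * expS x)
    (hHG : ∀ x y : ℝ,
      coshS * PowerSeries.mk (fun n => HG n x y / n.factorial) =
        2 * PowerSeries.X * (expS x * expTail 2 y)) :
    ∀ (n : ℕ) (x y : ℝ),
      HG n x y = n.factorial * ∑ l ∈ Finset.range (n / 2 + 1),
        y ^ l * SG (n - 2 * l) x / (l.factorial * (n - 2 * l).factorial) := by
  intro n x y
  have key : PowerSeries.mk (fun n => HG n x y / n.factorial)
      = expTail 2 y * PowerSeries.mk (fun n => SG n x / n.factorial) := by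
    apply mul_left_cancel₀ coshS_ne_zero
    rw [hHG x y, mul_comm (expTail 2 y), ← mul_assoc, ← hSG x, mul_assoc,
      mul_comm _ (expTail 2 y), ← mul_assoc]
  have hc := congrArg (PowerSeries.coeff (R := ℝ) n) key
  rw [PowerSeries.coeff_mk, PowerSeries.coeff_mul,
    Finset.Nat.sum_antidiagonal_eq_sum_range_succ_mk] at hc
  simp only [expTail, PowerSeries.coeff_mk, ite_mul, zero_mul] at hc
  rw [sum_even n (fun i => y ^ (i / 2) / ((i / 2).factorial : ℝ) * (SG (n - i) x / ((n - i).factorial : ℝ)))] at hc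
  have hn : (n.factorial : ℝ) ≠ 0 := by positivity
  rw [div_eq_iff hn] at hc
  rw [hc, mul_comm]; simp only [Finset.mul_sum]
  apply Finset.sum_congr rfl
  intro l hl
  have h2 : 2 * l / 2 = l := by omega
  rw [h2]
  have hl' : (l.factorial : ℝ) ≠ 0 := by positivity
  have hnl : ((n - 2 * l).factorial : ℝ) ≠ 0 := by positivity
  field_simp
end

section
/- For an integer j ≥ 2, the function F(x,y) = H_n^{(j)}(x,y) satisfies the generalized heat equation ∂F/∂y = ∂^j F/∂x^j with initial condition F(x,0) = x^n. -/
/-- The Gould-Hopper polynomial given by its explicit formula. -/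
noncomputable def gouldHopper (j n : ℕ) (x y : ℝ) : ℝ :=
  n.factorial * ∑ r ∈ Finset.range (n / j + 1),
    x ^ (n - j * r) * y ^ r / (r.factorial * (n - j * r).factorial)

lemma gh_iter_cmul_pow (c : ℝ) (m k : ℕ) :
    iteratedDeriv k (fun x : ℝ => c * x ^ m) = fun x => (m.descFactorial k : ℝ) * c * x ^ (m - k) := by
  induction k with
  | zero => simp
  | succ k ih =>
    rw [iteratedDeriv_succ, ih]
    funext x
    have : (fun x : ℝ => (m.descFactorial k : ℝ) * c * x ^ (m - k))
        = fun x : ℝ => ((m.descFactorial k : ℝ) * c) * x ^ (m - k) := rfl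
    rw [this, deriv_const_mul_field, deriv_pow_field, Nat.descFactorial_succ,
      ← Nat.sub_sub]
    push_cast
    ring

lemma gh_iter_sum {ι : Type*} (k : ℕ) (s : Finset ι) (f : ι → ℝ → ℝ)
    (h : ∀ i ∈ s, ContDiff ℝ k (f i)) (x : ℝ) :
    iteratedDeriv k (fun x => ∑ i ∈ s, f i x) x = ∑ i ∈ s, iteratedDeriv k (f i) x := by
  classical
  induction s using Finset.induction with
  | empty =>
    simp only [Finset.sum_empty]
    have : iteratedDeriv k (fun _ : ℝ => (0:ℝ)) x = 0 := by
      induction k with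
      | zero => simp
      | succ k ih => rw [iteratedDeriv_succ']; simpa using ih
    exact this
  | @insert a s hi ih =>
    have h1 : ContDiff ℝ k (f a) := h a (Finset.mem_insert_self a s)
    have h2 : ContDiff ℝ k (fun x => ∑ i ∈ s, f i x) :=
      ContDiff.sum fun i hi => h i (Finset.mem_insert_of_mem hi)
    rw [Finset.sum_insert hi, ← ih (fun i hi => h i (Finset.mem_insert_of_mem hi))]
    have : (fun x => ∑ i ∈ insert a s, f i x)
        = (f a + fun x => ∑ i ∈ s, f i x) := by
      funext z; simp [Finset.sum_insert hi]
    rw [this]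
    simp only [iteratedDeriv, iteratedFDeriv_add_apply h1.contDiffAt h2.contDiffAt,
      ContinuousMultilinearMap.add_apply]

theorem gould_hopper_heat_equation (j n : ℕ) (hj : 2 ≤ j) :
    (∀ x y : ℝ,
      deriv (fun y' => gouldHopper j n x y') y =
        iteratedDeriv j (fun x' => gouldHopper j n x' y) x) ∧
    ∀ x : ℝ, gouldHopper j n x 0 = x ^ n := by
  have hj0 : 0 < j := by omega
  constructor
  · intro x y
    -- LHS
    unfold gouldHopper
    rw [deriv_const_mul_field, deriv_fun_sum (fun r _ => by fun_prop)]
    simp only [deriv_div_const, deriv_const_mul_field, deriv_pow_field]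
    -- RHS
    have hfun : (fun x' => (n.factorial : ℝ) * ∑ r ∈ Finset.range (n / j + 1),
        x' ^ (n - j * r) * y ^ r / (r.factorial * (n - j * r).factorial))
        = fun x' => ∑ r ∈ Finset.range (n / j + 1),
          ((n.factorial : ℝ) * y ^ r / (r.factorial * (n - j * r).factorial)) * x' ^ (n - j * r) := by
      funext x'
      rw [Finset.mul_sum]
      exact Finset.sum_congr rfl fun r _ => by ring
    rw [hfun, gh_iter_sum _ _ _ (fun r _ => by fun_prop)]
    have hrw : ∀ r ∈ Finset.range (n / j + 1),
        iteratedDeriv j (fun x' : ℝ =>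
          ((n.factorial : ℝ) * y ^ r / (r.factorial * (n - j * r).factorial)) * x' ^ (n - j * r)) x
        = ((n - j * r).descFactorial j : ℝ) *
            ((n.factorial : ℝ) * y ^ r / (r.factorial * (n - j * r).factorial)) *
            x ^ (n - j * r - j) := fun r _ => by rw [gh_iter_cmul_pow]
    rw [Finset.sum_congr rfl hrw, Finset.mul_sum]
    -- peel r = 0 on the left, r = n / j on the right
    rw [Finset.sum_range_succ' _ (n / j), Finset.sum_range_succ]
    have hlast : (n - j * (n / j)).descFactorial j = 0 := by
      rw [Nat.descFactorial_eq_zero_iff_lt]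
      have := Nat.mod_add_div n j
      have := Nat.mod_lt n hj0
      omega
    rw [hlast]
    simp only [Nat.cast_zero, zero_mul, add_zero, pow_zero, Nat.cast_ofNat,
      CharP.cast_eq_zero, mul_zero, zero_div]
    refine Finset.sum_congr rfl fun r hr => ?_
    have hr' : r + 1 ≤ n / j := by
      have := Finset.mem_range.mp hr; omega
    have hle : j * r + j ≤ n := by
      have h := (Nat.le_div_iff_mul_le hj0).mp hr'
      have : (r + 1) * j = j * r + j := by ring
      omega
    have hjle : j ≤ n - j * r := by omega
    have e1 : n - j * r - j = n - j * (r + 1) := by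
      have : j * (r + 1) = j * r + j := by ring
      omega
    have hfact := Nat.factorial_mul_descFactorial hjle
    rw [e1] at hfact
    have hD : ((n - j * r).descFactorial j : ℝ)
        = ((n - j * r).factorial : ℝ) / ((n - j * (r + 1)).factorial : ℝ) := by
      rw [eq_div_iff (by exact_mod_cast (Nat.factorial_pos _).ne')]
      rw [mul_comm]
      exact_mod_cast hfact
    rw [e1, hD]
    simp only [Nat.add_sub_cancel, Nat.factorial_succ]
    push_cast
    have h1 : ((r.factorial : ℝ)) ≠ 0 := by exact_mod_cast (Nat.factorial_pos _).ne'
    have h2 : (((n - j * r).factorial : ℝ)) ≠ 0 := by exact_mod_cast (Nat.factorial_pos _).ne'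
    have h3 : (((n - j * (r + 1)).factorial : ℝ)) ≠ 0 := by
      exact_mod_cast (Nat.factorial_pos _).ne'
    have h4 : ((r : ℝ) + 1) ≠ 0 := by positivity
    field_simp
  · intro x
    unfold gouldHopper
    rw [Finset.sum_eq_single_of_mem 0 (Finset.mem_range.mpr (Nat.succ_pos _))
      (fun r _ hr => by simp [zero_pow hr])]
    simp [Nat.factorial_ne_zero, mul_div_cancel₀]
end
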